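/- Let 1 ≤ p₁ ≤ p₂ ≤ ∞. There exists a constant C > 0 such that ‖f‖_{∞,p₂} ≤ C ‖f‖_{∞,p₁} for every μ-measurable function f on ℝ. -/

import Mathlib

open MeasureTheory Set
open scoped ENNReal

/-- The weighted Lebesgue measure `dμ(x) = (2^{k+1} Γ(k+1))⁻¹ |x|^{2k+1} dx`. -/
noncomputable def dunklMeasure (k : ℝ) : Measure ℝ :=
  (volume : Measure ℝ).withDensity
    (fun x => ENNReal.ofReal ((2 ^ (k + 1) * Real.Gamma (k + 1))⁻¹ * |x| ^ (2 * k + 1)))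
/-- The "ball" `B(x,r)`: for `x ≠ 0`, `{y : max 0 (|x|-r) < |y| < |x|+r}`; `B(0,r) = (-r,r)`. -/
def dunklBall (x r : ℝ) : Set ℝ :=
  if x = 0 then Set.Ioo (-r) r
  else {y : ℝ | max 0 (|x| - r) < |y| ∧ |y| < |x| + r}
/-- `_r‖f‖_{∞,p}`, the `L^p(μ)`-norm in `y` of `‖f χ_{B(y,r)}‖_{L^∞(μ)}`. -/
noncomputable def rNorm (k : ℝ) (r : ℝ) (p : ℝ≥0∞) (f : ℝ → ℂ) : ℝ≥0∞ :=
  if p = ⊤ then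
    essSup (fun y => eLpNorm ((dunklBall y r).indicator f) ⊤ (dunklMeasure k)) (dunklMeasure k)
  else
    (∫⁻ y, (eLpNorm ((dunklBall y r).indicator f) ⊤ (dunklMeasure k)) ^ p.toReal
        ∂(dunklMeasure k)) ^ (1 / p.toReal)
/-- `‖f‖_{∞,p} = _1‖f‖_{∞,p}`. -/
noncomputable def wNorm (k : ℝ) (p : ℝ≥0∞) (f : ℝ → ℂ) : ℝ≥0∞ := rNorm k 1 p f

namespace Stmt11Aux

lemma dunkl_singleton_zero (k : ℝ) : dunklMeasure k {0} = 0 := by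
  rw [dunklMeasure, withDensity_apply _ (measurableSet_singleton 0)]
  exact setLIntegral_measure_zero _ _ (measure_singleton 0)

lemma eLpNorm_ind_mono (k : ℝ) (f : ℝ → ℂ) {s t : Set ℝ} (h : s ⊆ t ∪ {0}) :
    eLpNorm (s.indicator f) ⊤ (dunklMeasure k) ≤ eLpNorm (t.indicator f) ⊤ (dunklMeasure k) := by
  have h0 : ∀ᵐ x ∂(dunklMeasure k), x ∉ ({0} : Set ℝ) :=
    measure_eq_zero_iff_ae_notMem.mp (dunkl_singleton_zero k)
  have hcongr : s.indicator f =ᵐ[dunklMeasure k] (s \ {0}).indicator f := by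
    filter_upwards [h0] with x hx
    by_cases hxs : x ∈ s
    · rw [indicator_of_mem hxs, indicator_of_mem (mem_diff_of_mem hxs hx)]
    · rw [indicator_of_notMem hxs, indicator_of_notMem (fun hx' => hxs hx'.1)]
  rw [eLpNorm_congr_ae hcongr]
  apply eLpNorm_mono
  intro x
  by_cases hxs : x ∈ s \ {0}
  · have hxt : x ∈ t := by
      rcases h hxs.1 with h' | h'
      · exact h'
      · exact absurd h' hxs.2
    rw [indicator_of_mem hxs, indicator_of_mem hxt]
  · rw [indicator_of_notMem hxs]; simp

lemma eLpNorm_ind_union3 (k : ℝ) (f : ℝ → ℂ) {s t₁ t₂ t₃ : Set ℝ} (h : s ⊆ t₁ ∪ t₂ ∪ t₃) :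
    eLpNorm (s.indicator f) ⊤ (dunklMeasure k) ≤
      eLpNorm (t₁.indicator f) ⊤ (dunklMeasure k) + eLpNorm (t₂.indicator f) ⊤ (dunklMeasure k)
        + eLpNorm (t₃.indicator f) ⊤ (dunklMeasure k) := by
  simp only [eLpNorm_exponent_top, eLpNormEssSup]
  have h₁ := ENNReal.ae_le_essSup (μ := dunklMeasure k) (fun x => (‖t₁.indicator f x‖₊ : ℝ≥0∞))
  have h₂ := ENNReal.ae_le_essSup (μ := dunklMeasure k) (fun x => (‖t₂.indicator f x‖₊ : ℝ≥0∞))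
  have h₃ := ENNReal.ae_le_essSup (μ := dunklMeasure k) (fun x => (‖t₃.indicator f x‖₊ : ℝ≥0∞))
  refine essSup_le_of_ae_le _ ?_
  filter_upwards [h₁, h₂, h₃] with x hx1 hx2 hx3
  by_cases hxs : x ∈ s
  · rcases h hxs with (h' | h') | h'
    · calc ((‖s.indicator f x‖₊ : ℝ≥0∞)) = ‖t₁.indicator f x‖₊ := by
            rw [indicator_of_mem hxs, indicator_of_mem h']
        _ ≤ _ := le_trans hx1 (le_trans (le_add_right le_rfl) (le_add_right le_rfl))
    · calc ((‖s.indicator f x‖₊ : ℝ≥0∞)) = ‖t₂.indicator f x‖₊ := by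
            rw [indicator_of_mem hxs, indicator_of_mem h']
        _ ≤ _ := le_trans hx2 (le_trans (le_add_left le_rfl) (le_add_right le_rfl))
    · calc ((‖s.indicator f x‖₊ : ℝ≥0∞)) = ‖t₃.indicator f x‖₊ := by
            rw [indicator_of_mem hxs, indicator_of_mem h']
        _ ≤ _ := le_trans hx3 (le_add_left le_rfl)
  · rw [indicator_of_notMem hxs]
    simp

lemma dunklBall_shrink {c z : ℝ} (h1 : |c| ≤ |z|) (h2 : |z| ≤ |c| + 2⁻¹) :
    dunklBall c 2⁻¹ ⊆ dunklBall z 1 ∪ {0} := by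
  intro x hx
  rcases eq_or_ne x 0 with rfl | hx0
  · exact Or.inr rfl
  refine Or.inl ?_
  have hax : 0 < |x| := abs_pos.mpr hx0
  have habs : |c| - 2⁻¹ < |x| ∧ |x| < |c| + 2⁻¹ := by
    by_cases hc : c = 0
    · rw [dunklBall, if_pos hc, mem_Ioo] at hx
      have hxlt : |x| < 2⁻¹ := abs_lt.mpr hx
      subst hc
      simp only [abs_zero]
      constructor <;> linarith
    · rw [dunklBall, if_neg hc] at hx
      obtain ⟨h3, h4⟩ := hx
      exact ⟨lt_of_le_of_lt (le_max_right _ _) h3, h4⟩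
  by_cases hz : z = 0
  · subst hz
    rw [dunklBall, if_pos rfl, mem_Ioo, ← abs_lt]
    simp only [abs_zero] at h1 h2
    have hc0 : |c| = 0 := le_antisymm (le_trans h1 le_rfl) (abs_nonneg c)
    linarith [habs.2]
  · rw [dunklBall, if_neg hz]
    refine ⟨max_lt hax (by linarith [habs.1]), by linarith [habs.2]⟩

lemma dunklBall_cover (y : ℝ) :
    dunklBall y 1 ⊆
      dunklBall (max (|y| - 2⁻¹) 0) 2⁻¹ ∪ dunklBall |y| 2⁻¹ ∪ dunklBall (|y| + 2⁻¹) 2⁻¹ := by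
  intro x hx
  have ha0 : (0:ℝ) ≤ |y| := abs_nonneg y
  by_cases hy : y = 0
  · subst hy
    rw [dunklBall, if_pos rfl, mem_Ioo] at hx
    have hs : |x| < 1 := abs_lt.mpr hx
    by_cases h1 : |x| < 2⁻¹
    · refine Or.inl (Or.inr ?_)
      rw [abs_zero, dunklBall, if_pos rfl, mem_Ioo, ← abs_lt]
      exact h1
    · refine Or.inr ?_
      rw [abs_zero, zero_add, dunklBall, if_neg (by norm_num)]
      push_neg at h1
      constructor
      · have : |(2:ℝ)⁻¹| = 2⁻¹ := by rw [abs_of_pos]; norm_num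
        rw [this]
        refine max_lt (by linarith) (by linarith)
      · have : |(2:ℝ)⁻¹| = 2⁻¹ := by rw [abs_of_pos]; norm_num
        rw [this]; linarith
  · rw [dunklBall, if_neg hy] at hx
    obtain ⟨hxl, hxu⟩ := hx
    have hx0 : 0 < |x| := lt_of_le_of_lt (le_max_left _ _) hxl
    have hxl' : |y| - 1 < |x| := lt_of_le_of_lt (le_max_right _ _) hxl
    have hy0 : 0 < |y| := abs_pos.mpr hy
    by_cases h1 : |x| ≤ |y| - 2⁻¹
    · -- left ball, center |y| - 2⁻¹ > 0
      refine Or.inl (Or.inl ?_)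
      have hc : max (|y| - 2⁻¹) 0 = |y| - 2⁻¹ := max_eq_left (by linarith)
      have hcne : max (|y| - 2⁻¹) 0 ≠ 0 := by rw [hc]; intro h; rw [h] at h1; linarith
      rw [dunklBall, if_neg hcne, hc]
      have hcabs : |(|y| - 2⁻¹)| = |y| - 2⁻¹ := abs_of_nonneg (by linarith)
      rw [hcabs]
      exact ⟨max_lt hx0 (by linarith), by linarith⟩
    · push_neg at h1
      by_cases h2 : |x| < |y| + 2⁻¹
      · refine Or.inl (Or.inr ?_)
        rw [dunklBall, if_neg (abs_ne_zero.mpr hy), abs_abs]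
        exact ⟨max_lt hx0 (by linarith), h2⟩
      · push_neg at h2
        refine Or.inr ?_
        have hcne : |y| + 2⁻¹ ≠ 0 := by positivity
        rw [dunklBall, if_neg hcne]
        have hcabs : |(|y| + 2⁻¹)| = |y| + 2⁻¹ := abs_of_pos (by positivity)
        rw [hcabs]
        exact ⟨max_lt hx0 (by linarith), by linarith⟩

/-- A uniform positive lower bound for the measure of the annuli used in the proof. -/
noncomputable def mK (k : ℝ) : ℝ≥0∞ :=
  ENNReal.ofReal ((2 ^ (k + 1) * Real.Gamma (k + 1))⁻¹ * (4⁻¹ : ℝ) ^ (2 * k + 1)) *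
    ENNReal.ofReal 4⁻¹

lemma cG_pos {k : ℝ} (hk : -1/2 < k) : 0 < (2 ^ (k + 1) * Real.Gamma (k + 1))⁻¹ := by
  have h1 : (0:ℝ) < 2 ^ (k + 1) := Real.rpow_pos_of_pos (by norm_num) _
  have h2 : 0 < Real.Gamma (k + 1) := Real.Gamma_pos_of_pos (by linarith)
  positivity

lemma mK_pos {k : ℝ} (hk : -1/2 < k) : 0 < mK k := by
  have h1 := cG_pos hk
  have h2 : (0:ℝ) < (4⁻¹ : ℝ) ^ (2 * k + 1) := Real.rpow_pos_of_pos (by norm_num) _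
  exact ENNReal.mul_pos (ne_of_gt (ENNReal.ofReal_pos.mpr (by positivity)))
    (ne_of_gt (ENNReal.ofReal_pos.mpr (by norm_num)))

lemma mK_ne_top (k : ℝ) : mK k ≠ ⊤ :=
  ENNReal.mul_ne_top ENNReal.ofReal_ne_top ENNReal.ofReal_ne_top

lemma annulus_measurable (c : ℝ) :
    MeasurableSet {z : ℝ | |c| ≤ |z| ∧ |z| ≤ |c| + 2⁻¹} := by
  apply MeasurableSet.inter
  · exact measurableSet_le measurable_const measurable_abs
  · exact measurableSet_le measurable_abs measurable_const

lemma mK_le_measure {k : ℝ} (hk : -1/2 < k) (c : ℝ) :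
    mK k ≤ dunklMeasure k {z : ℝ | |c| ≤ |z| ∧ |z| ≤ |c| + 2⁻¹} := by
  have ha0 : (0:ℝ) ≤ |c| := abs_nonneg c
  have hsub : Icc (|c| + 4⁻¹) (|c| + 2⁻¹) ⊆ {z : ℝ | |c| ≤ |z| ∧ |z| ≤ |c| + 2⁻¹} := by
    intro z hz
    have hz0 : (0:ℝ) ≤ z := by
      have := hz.1; linarith
    have hzz : |z| = z := abs_of_nonneg hz0
    constructor
    · rw [hzz]; linarith [hz.1]
    · rw [hzz]; exact hz.2
  refine le_trans ?_ (measure_mono hsub)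
  rw [dunklMeasure, withDensity_apply _ measurableSet_Icc]
  have hcalc : mK k = ∫⁻ _ in Icc (|c| + 4⁻¹) (|c| + 2⁻¹),
      ENNReal.ofReal ((2 ^ (k + 1) * Real.Gamma (k + 1))⁻¹ * (4⁻¹ : ℝ) ^ (2 * k + 1)) ∂volume := by
    rw [setLIntegral_const, Real.volume_Icc,
      show |c| + 2⁻¹ - (|c| + 4⁻¹) = (4⁻¹ : ℝ) by ring]
    rfl
  rw [hcalc]
  refine setLIntegral_mono' measurableSet_Icc (fun x hx => ?_)
  apply ENNReal.ofReal_le_ofReal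
  apply mul_le_mul_of_nonneg_left ?_ (le_of_lt (cG_pos hk))
  have hx0 : (0:ℝ) ≤ x := by have := hx.1; linarith
  rw [abs_of_nonneg hx0]
  exact Real.rpow_le_rpow (by norm_num) (by have := hx.1; linarith) (by linarith)

end Stmt11Aux

open Stmt11Aux in
/-- For `1 ≤ p₁ ≤ p₂ ≤ ∞`, there is `C > 0` with `‖f‖_{∞,p₂} ≤ C ‖f‖_{∞,p₁}`
for every measurable `f`. -/
theorem stmt11 (k : ℝ) (hk : -1/2 < k) (p₁ p₂ : ℝ≥0∞) (hp₁ : 1 ≤ p₁) (hp : p₁ ≤ p₂) :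
    ∃ C : ℝ≥0∞, 0 < C ∧ C ≠ ⊤ ∧ ∀ f : ℝ → ℂ, Measurable f →
      wNorm k p₂ f ≤ C * wNorm k p₁ f := by
  by_cases hp₁T : p₁ = ⊤
  · have hp₂T : p₂ = ⊤ := top_le_iff.mp (hp₁T ▸ hp)
    subst hp₁T; subst hp₂T
    exact ⟨1, one_pos, ENNReal.one_ne_top, fun f _ => by rw [one_mul]⟩
  set q₁ := p₁.toReal with hq₁def
  have hq₁ : 1 ≤ q₁ := by
    have := ENNReal.toReal_mono hp₁T hp₁
    simpa using this
  have hq₁0 : 0 < q₁ := lt_of_lt_of_le one_pos hq₁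
  set m := mK k with hmdef
  have hm0 : m ≠ 0 := ne_of_gt (mK_pos hk)
  have hmT : m ≠ ⊤ := mK_ne_top k
  set C₀ : ℝ≥0∞ := 3 * (m⁻¹) ^ (1 / q₁) with hC₀def
  have hC₀0 : C₀ ≠ 0 := by
    apply mul_ne_zero (by norm_num)
    exact ne_of_gt (ENNReal.rpow_pos (ENNReal.inv_pos.mpr hmT) (ENNReal.inv_ne_top.mpr hm0))
  have hC₀T : C₀ ≠ ⊤ := by
    apply ENNReal.mul_ne_top (by norm_num)
    exact ENNReal.rpow_ne_top_of_nonneg (by positivity) (ENNReal.inv_ne_top.mpr hm0)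
  -- the key pointwise bound
  have key : ∀ f : ℝ → ℂ, ∀ y : ℝ,
      eLpNorm ((dunklBall y 1).indicator f) ⊤ (dunklMeasure k) ≤ C₀ * wNorm k p₁ f := by
    intro f y
    have hwN : wNorm k p₁ f =
        (∫⁻ z, (eLpNorm ((dunklBall z (1:ℝ)).indicator f) ⊤ (dunklMeasure k)) ^ q₁
          ∂(dunklMeasure k)) ^ (1 / q₁) := by
      rw [wNorm, rNorm, if_neg hp₁T]
    set I := ∫⁻ z, (eLpNorm ((dunklBall z (1:ℝ)).indicator f) ⊤ (dunklMeasure k)) ^ q₁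
      ∂(dunklMeasure k) with hIdef
    have hbound : ∀ c : ℝ,
        eLpNorm ((dunklBall c 2⁻¹).indicator f) ⊤ (dunklMeasure k) ≤ (m⁻¹) ^ (1 / q₁) * I ^ (1 / q₁) := by
      intro c
      set h := eLpNorm ((dunklBall c 2⁻¹).indicator f) ⊤ (dunklMeasure k) with hhdef
      have hcheb : h ^ q₁ * m ≤ I := by
        calc h ^ q₁ * m ≤ h ^ q₁ * dunklMeasure k {z : ℝ | |c| ≤ |z| ∧ |z| ≤ |c| + 2⁻¹} :=
              mul_le_mul_right (mK_le_measure hk c) _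
          _ = ∫⁻ z, ({z : ℝ | |c| ≤ |z| ∧ |z| ≤ |c| + 2⁻¹}).indicator (fun _ => h ^ q₁) z
                ∂(dunklMeasure k) := by
              rw [lintegral_indicator (annulus_measurable c), setLIntegral_const]
          _ ≤ I := by
              apply lintegral_mono
              intro z
              by_cases hz : z ∈ {z : ℝ | |c| ≤ |z| ∧ |z| ≤ |c| + 2⁻¹}
              · rw [indicator_of_mem hz]
                refine ENNReal.rpow_le_rpow ?_ (le_of_lt hq₁0)
                exact eLpNorm_ind_mono k f (dunklBall_shrink hz.1 hz.2)
              · rw [indicator_of_notMem hz]; exact zero_le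
      have hdiv : h ^ q₁ ≤ I / m :=
        (ENNReal.le_div_iff_mul_le (Or.inl hm0) (Or.inl hmT)).mpr hcheb
      calc h = (h ^ q₁) ^ (1 / q₁) := by
            rw [← ENNReal.rpow_mul, mul_one_div, div_self (ne_of_gt hq₁0), ENNReal.rpow_one]
        _ ≤ (I / m) ^ (1 / q₁) := ENNReal.rpow_le_rpow hdiv (by positivity)
        _ = (m⁻¹) ^ (1 / q₁) * I ^ (1 / q₁) := by
            rw [div_eq_mul_inv, ENNReal.mul_rpow_of_nonneg _ _ (by positivity : (0:ℝ) ≤ 1 / q₁),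
              mul_comm]
    calc eLpNorm ((dunklBall y 1).indicator f) ⊤ (dunklMeasure k)
        ≤ eLpNorm ((dunklBall (max (|y| - 2⁻¹) 0) 2⁻¹).indicator f) ⊤ (dunklMeasure k)
          + eLpNorm ((dunklBall |y| 2⁻¹).indicator f) ⊤ (dunklMeasure k)
          + eLpNorm ((dunklBall (|y| + 2⁻¹) 2⁻¹).indicator f) ⊤ (dunklMeasure k) :=
          eLpNorm_ind_union3 k f (dunklBall_cover y)
      _ ≤ (m⁻¹) ^ (1 / q₁) * I ^ (1 / q₁) + (m⁻¹) ^ (1 / q₁) * I ^ (1 / q₁)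
          + (m⁻¹) ^ (1 / q₁) * I ^ (1 / q₁) :=
          add_le_add (add_le_add (hbound _) (hbound _)) (hbound _)
      _ = C₀ * wNorm k p₁ f := by rw [hwN, hC₀def]; ring
  by_cases hp₂T : p₂ = ⊤
  · subst hp₂T
    refine ⟨C₀, pos_iff_ne_zero.mpr hC₀0, hC₀T, fun f _ => ?_⟩
    rw [wNorm, rNorm, if_pos rfl]
    exact essSup_le_of_ae_le _ (Filter.Eventually.of_forall (fun y => key f y))
  · set q₂ := p₂.toReal with hq₂def
    have hq₁₂ : q₁ ≤ q₂ := ENNReal.toReal_mono hp₂T hp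
    have hq₂0 : 0 < q₂ := lt_of_lt_of_le hq₁0 hq₁₂
    have hd0 : (0:ℝ) ≤ q₂ - q₁ := by linarith
    refine ⟨C₀ ^ ((q₂ - q₁) / q₂), ?_, ?_, fun f _ => ?_⟩
    · exact ENNReal.rpow_pos (pos_iff_ne_zero.mpr hC₀0) hC₀T
    · exact ENNReal.rpow_ne_top_of_nonneg (by positivity) hC₀T
    · set N := wNorm k p₁ f with hNdef
      by_cases hN : N = ⊤
      · rw [hN, ENNReal.mul_top (ne_of_gt (ENNReal.rpow_pos (pos_iff_ne_zero.mpr hC₀0) hC₀T))]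
        exact le_top
      have hw₂ : wNorm k p₂ f =
          (∫⁻ y, (eLpNorm ((dunklBall y (1:ℝ)).indicator f) ⊤ (dunklMeasure k)) ^ q₂
            ∂(dunklMeasure k)) ^ (1 / q₂) := by
        rw [wNorm, rNorm, if_neg hp₂T]
      by_cases hN0 : N = 0
      · have hg0 : ∀ y, eLpNorm ((dunklBall y (1:ℝ)).indicator f) ⊤ (dunklMeasure k) = 0 :=
          fun y => le_antisymm (by simpa [← hNdef, hN0] using key f y) (zero_le)
        have hz : wNorm k p₂ f = 0 := by
          rw [hw₂]
          have : (∫⁻ y, (eLpNorm ((dunklBall y (1:ℝ)).indicator f) ⊤ (dunklMeasure k)) ^ q₂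
              ∂(dunklMeasure k)) = 0 := by
            rw [← lintegral_zero (μ := dunklMeasure k)]
            apply lintegral_congr
            intro y
            rw [hg0 y, ENNReal.zero_rpow_of_pos hq₂0]
          rw [this, ENNReal.zero_rpow_of_pos (by positivity)]
        rw [hz]
        exact zero_le
      · set M := C₀ * N with hMdef
        have hMT : M ≠ ⊤ := ENNReal.mul_ne_top hC₀T hN
        set I₁ := ∫⁻ z, (eLpNorm ((dunklBall z (1:ℝ)).indicator f) ⊤ (dunklMeasure k)) ^ q₁
          ∂(dunklMeasure k) with hI₁def
        have hNI : N = I₁ ^ (1 / q₁) := by rw [hNdef, wNorm, rNorm, if_neg hp₁T]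
        have hI2 : (∫⁻ y, (eLpNorm ((dunklBall y (1:ℝ)).indicator f) ⊤ (dunklMeasure k)) ^ q₂
            ∂(dunklMeasure k)) ≤ I₁ * M ^ (q₂ - q₁) := by
          have hMd : M ^ (q₂ - q₁) ≠ ⊤ := ENNReal.rpow_ne_top_of_nonneg hd0 hMT
          calc (∫⁻ y, (eLpNorm ((dunklBall y (1:ℝ)).indicator f) ⊤ (dunklMeasure k)) ^ q₂
              ∂(dunklMeasure k))
              ≤ ∫⁻ y, (eLpNorm ((dunklBall y (1:ℝ)).indicator f) ⊤ (dunklMeasure k)) ^ q₁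
                  * M ^ (q₂ - q₁) ∂(dunklMeasure k) := by
                apply lintegral_mono
                intro y
                dsimp only
                have heq : q₁ + (q₂ - q₁) = q₂ := by ring
                conv_lhs => rw [← heq]
                rw [ENNReal.rpow_add_of_nonneg _ _ (le_of_lt hq₁0) hd0]
                exact mul_le_mul_right (ENNReal.rpow_le_rpow (key f y) hd0) _
            _ = I₁ * M ^ (q₂ - q₁) := lintegral_mul_const' _ _ hMd
        calc wNorm k p₂ f
            ≤ (I₁ * M ^ (q₂ - q₁)) ^ (1 / q₂) := by
              rw [hw₂]; exact ENNReal.rpow_le_rpow hI2 (by positivity)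
          _ = I₁ ^ (1 / q₂) * M ^ ((q₂ - q₁) / q₂) := by
              rw [ENNReal.mul_rpow_of_nonneg _ _ (by positivity : (0:ℝ) ≤ 1 / q₂),
                ← ENNReal.rpow_mul]
              congr 1
              field_simp
          _ = N ^ (q₁ / q₂) * M ^ ((q₂ - q₁) / q₂) := by
              rw [hNI, ← ENNReal.rpow_mul]
              congr 2
              field_simp
          _ = N ^ (q₁ / q₂) * (C₀ ^ ((q₂ - q₁) / q₂) * N ^ ((q₂ - q₁) / q₂)) := by
              rw [hMdef, ENNReal.mul_rpow_of_nonneg _ _ (by positivity : (0:ℝ) ≤ (q₂ - q₁) / q₂)]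
          _ = C₀ ^ ((q₂ - q₁) / q₂) * (N ^ (q₁ / q₂) * N ^ ((q₂ - q₁) / q₂)) := by ring
          _ = C₀ ^ ((q₂ - q₁) / q₂) * N := by
              congr 1
              rw [← ENNReal.rpow_add _ _ hN0 hN]
              rw [show q₁ / q₂ + (q₂ - q₁) / q₂ = 1 by field_simp; ring]
              exact ENNReal.rpow_one N
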